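/- Let s ≥ 9 be an integer and let r be the unique integer in {−2,−1,0,1,2} with s ≡ r (mod 5). If r ∈ {−1,0,1,2}, then P(2^s) − P(2^{s−1}) = 5·2^{s−1} + 2^{1+r} · (2^{s−r} − 1)/31. If r = −2, then P(2^s) − P(2^{s−1}) = 5·2^{s−1} + 1 + 16 · (2^{s−3} − 1)/31. -/

import Mathlib

/-- `Pfun m = 5m + ∑_{i=0}^{∞} ⌊m/(8·32^i)⌋`; the sum is finite because every
term with `8·32^i > m` equals `0`. This is the width `P_𝒥(K,J)` of the Q-effective
implementation of the Jacobi algorithm on a `K×J` grid, with `m = KJ`. -/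
noncomputable def Pfun (m : ℕ) : ℕ := 5 * m + ∑' i : ℕ, m / (8 * 32 ^ i)

lemma term_zero (m i : ℕ) (h : m ≤ i) : 2 ^ m / (8 * 32 ^ i) = 0 := by
  apply Nat.div_eq_of_lt
  calc 2 ^ m ≤ 2 ^ i := Nat.pow_le_pow_right (by norm_num) h
    _ ≤ 32 ^ i := Nat.pow_le_pow_left (by norm_num) i
    _ < 8 * 32 ^ i := by
        have : 0 < 32 ^ i := Nat.pow_pos (by norm_num)
        omega

lemma jacobi_tsum_eq (n : ℕ) :
    (∑' i : ℕ, 2 ^ n / (8 * 32 ^ i)) = ∑ i ∈ Finset.range n, 2 ^ n / (8 * 32 ^ i) := by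
  apply tsum_eq_sum
  intro i hi
  simp only [Finset.mem_range, not_lt] at hi
  exact term_zero n i hi

lemma jacobi_sum_closed (n : ℕ) (hn : 3 ≤ n) :
    31 * (∑ i ∈ Finset.range n, 2 ^ n / (8 * 32 ^ i)) + 2 ^ ((n - 3) % 5) = 2 ^ (n + 2) := by
  induction n using Nat.strong_induction_on with
  | _ n ih =>
    by_cases h8 : n < 8
    · interval_cases n <;> decide
    · push_neg at h8
      have ih5 := ih (n - 5) (by omega) (by omega)
      have hsplit : ∑ i ∈ Finset.range n, 2 ^ n / (8 * 32 ^ i)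
          = (∑ i ∈ Finset.range (n-1), 2 ^ n / (8 * 32 ^ (i+1))) + 2 ^ n / (8 * 32 ^ 0) := by
        rw [show n = (n-1)+1 by omega, Finset.sum_range_succ']
        norm_num
      have hterm : ∀ i : ℕ, 2 ^ n / (8 * 32 ^ (i+1)) = 2 ^ (n-5) / (8 * 32 ^ i) := by
        intro i
        have e : n - 5 + 5 = n := by omega
        have h2 : 2 ^ n = 32 * 2 ^ (n-5) := by
          calc 2 ^ n = 2 ^ (n-5+5) := by rw [e]
            _ = 32 * 2 ^ (n-5) := by rw [pow_add]; ring
        rw [h2, pow_succ, show 8 * (32 ^ i * 32) = 32 * (8 * 32 ^ i) by ring,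
          Nat.mul_div_mul_left _ _ (by norm_num)]
      have hshrink : ∑ i ∈ Finset.range (n-1), 2 ^ (n-5) / (8 * 32 ^ i)
          = ∑ i ∈ Finset.range (n-5), 2 ^ (n-5) / (8 * 32 ^ i) := by
        symm
        apply Finset.sum_subset (Finset.range_subset_range.2 (by omega))
        intro i _ hi
        simp only [Finset.mem_range, not_lt] at hi
        exact term_zero _ _ hi
      have h0 : 2 ^ n / (8 * 32 ^ 0) = 2 ^ (n-3) := by
        rw [pow_zero, mul_one, show (8:ℕ) = 2^3 by norm_num, Nat.pow_div (by omega) (by norm_num)]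
      have hm : (n - 5 - 3) % 5 = (n - 3) % 5 := by omega
      have hp1 : (2:ℕ) ^ (n + 2) = 32 * 2 ^ (n - 3) := by
        rw [show n + 2 = (n-3)+5 by omega, pow_add]; ring
      have hp2 : (2:ℕ) ^ (n - 5 + 2) = 2 ^ (n - 3) := by rw [show n-5+2 = n-3 by omega]
      rw [hsplit]
      simp only [hterm] at *
      rw [hshrink, h0]
      rw [hm, hp2] at ih5
      omega

lemma jacobi_dvd31 (k : ℕ) : (31:ℤ) ∣ 2 ^ (5*k) - 1 := by
  have h : (2:ℤ) ^ (5*k) = 32 ^ k := by rw [pow_mul]; norm_num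
  rw [h]
  simpa using sub_dvd_pow_sub_pow (32:ℤ) 1 k


/-- Let `s ≥ 9` and let `r` be the unique integer in `{−2,−1,0,1,2}` with
`s ≡ r (mod 5)`. If `r ∈ {−1,0,1,2}`, then
`P(2^s) − P(2^{s−1}) = 5·2^{s−1} + 2^{1+r} · (2^{s−r} − 1)/31`. If `r = −2`, then
`P(2^s) − P(2^{s−1}) = 5·2^{s−1} + 1 + 16 · (2^{s−3} − 1)/31`. -/
theorem stmt_15 (s : ℕ) (hs : 9 ≤ s) (r : ℤ) (hr1 : -2 ≤ r) (hr2 : r ≤ 2)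
    (hmod : (s : ℤ) ≡ r [ZMOD 5]) :
    (-1 ≤ r →
      (Pfun (2 ^ s) : ℤ) - Pfun (2 ^ (s - 1)) =
        5 * 2 ^ (s - 1) + 2 ^ (1 + r).toNat * ((2 ^ ((s : ℤ) - r).toNat - 1) / 31)) ∧
    (r = -2 →
      (Pfun (2 ^ s) : ℤ) - Pfun (2 ^ (s - 1)) =
        5 * 2 ^ (s - 1) + 1 + 16 * (((2 : ℤ) ^ (s - 3) - 1) / 31)) := by

  have hA := jacobi_sum_closed s (by omega)
  have hB := jacobi_sum_closed (s-1) (by omega)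
  set A : ℕ := ∑ i ∈ Finset.range s, 2^s/(8*32^i) with hAdef
  set B : ℕ := ∑ i ∈ Finset.range (s-1), 2^(s-1)/(8*32^i) with hBdef
  have hPa0 : Pfun (2^s) = 5*2^s + A := by rw [Pfun, jacobi_tsum_eq, hAdef]
  have hPb0 : Pfun (2^(s-1)) = 5*2^(s-1) + B := by rw [Pfun, jacobi_tsum_eq, hBdef]
  have hPa : (Pfun (2^s) : ℤ) = 5*2^s + (A:ℤ) := by rw [hPa0]; push_cast; ring
  have hPb : (Pfun (2^(s-1)) : ℤ) = 5*2^(s-1) + (B:ℤ) := by rw [hPb0]; push_cast; ring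
  have hA' : (31:ℤ) * A + 2^((s-3)%5) = 2^(s+2) := by exact_mod_cast hA
  have hB' : (31:ℤ) * B + 2^((s-1-3)%5) = 2^(s-1+2) := by exact_mod_cast hB
  have hmod' : (s:ℤ) % 5 = r % 5 := hmod
  have pw : ∀ a b : ℕ, a = (s-3) + b → (2:ℤ)^a = 2^b * 2^(s-3) := by
    intro a b h; rw [h, pow_add]; ring
  have e1 : (2:ℤ)^(s+2) = 32 * 2^(s-3) := by rw [pw (s+2) 5 (by omega)]; norm_num
  have e2 : (2:ℤ)^(s-1+2) = 16 * 2^(s-3) := by rw [pw (s-1+2) 4 (by omega)]; norm_num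
  have e3 : (2:ℤ)^(s-1) = 4 * 2^(s-3) := by rw [pw (s-1) 2 (by omega)]; norm_num
  have e4 : (2:ℤ)^s = 8 * 2^(s-3) := by rw [pw s 3 (by omega)]; norm_num
  rw [e1] at hA'
  rw [e2] at hB'
  interval_cases r
  · -- r = -2
    refine ⟨fun h => absurd h (by norm_num), fun _ => ?_⟩
    have hu : s % 5 = 3 := by omega
    rw [show (s-3)%5 = 0 by omega] at hA'
    rw [show (s-1-3)%5 = 4 by omega] at hB'
    obtain ⟨c, hc⟩ := jacobi_dvd31 ((s-3)/5)
    rw [show 5*((s-3)/5) = s-3 by omega] at hc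
    rw [hPa, hPb, hc, Int.mul_ediv_cancel_left _ (by norm_num), e3, e4]
    norm_num [Int.toNat_natCast] at hA' hB' ⊢
    linarith [hA', hB', hc]
  · -- r = -1
    refine ⟨fun _ => ?_, fun h => absurd h (by norm_num)⟩
    have hu : s % 5 = 4 := by omega
    rw [show (s-3)%5 = 1 by omega] at hA'
    rw [show (s-1-3)%5 = 0 by omega] at hB'
    have e5 : (2:ℤ)^(s+1) = 16 * 2^(s-3) := by rw [pw (s+1) 4 (by omega)]; norm_num
    obtain ⟨c, hc⟩ := jacobi_dvd31 ((s+1)/5)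
    rw [show 5*((s+1)/5) = s+1 by omega] at hc
    rw [show ((s:ℤ) - (-1)).toNat = s+1 by omega]
    rw [hPa, hPb, hc, Int.mul_ediv_cancel_left _ (by norm_num), e3, e4]
    rw [e5] at hc
    norm_num [Int.toNat_natCast] at hA' hB' ⊢
    linarith [hA', hB', hc]
  · -- r = 0
    refine ⟨fun _ => ?_, fun h => absurd h (by norm_num)⟩
    have hu : s % 5 = 0 := by omega
    rw [show (s-3)%5 = 2 by omega] at hA'
    rw [show (s-1-3)%5 = 1 by omega] at hB'
    obtain ⟨c, hc⟩ := jacobi_dvd31 (s/5)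
    rw [show 5*(s/5) = s by omega] at hc
    rw [show ((s:ℤ) - 0).toNat = s by omega]
    rw [hPa, hPb, hc, Int.mul_ediv_cancel_left _ (by norm_num), e3, e4]
    rw [e4] at hc
    norm_num [Int.toNat_natCast] at hA' hB' ⊢
    linarith [hA', hB', hc]
  · -- r = 1
    refine ⟨fun _ => ?_, fun h => absurd h (by norm_num)⟩
    have hu : s % 5 = 1 := by omega
    rw [show (s-3)%5 = 3 by omega] at hA'
    rw [show (s-1-3)%5 = 2 by omega] at hB'
    obtain ⟨c, hc⟩ := jacobi_dvd31 ((s-1)/5)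
    rw [show 5*((s-1)/5) = s-1 by omega] at hc
    rw [show ((s:ℤ) - 1).toNat = s-1 by omega]
    rw [hPa, hPb, hc, Int.mul_ediv_cancel_left _ (by norm_num), e3, e4]
    rw [e3] at hc
    norm_num [Int.toNat_natCast] at hA' hB' ⊢
    rw [show (2:ℤ) ^ Int.toNat 2 = 4 from rfl]
    linarith [hA', hB', hc]
  · -- r = 2
    refine ⟨fun _ => ?_, fun h => absurd h (by norm_num)⟩
    have hu : s % 5 = 2 := by omega
    rw [show (s-3)%5 = 4 by omega] at hA'
    rw [show (s-1-3)%5 = 3 by omega] at hB'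
    have e6 : (2:ℤ)^(s-2) = 2 * 2^(s-3) := by rw [pw (s-2) 1 (by omega)]; norm_num
    obtain ⟨c, hc⟩ := jacobi_dvd31 ((s-2)/5)
    rw [show 5*((s-2)/5) = s-2 by omega] at hc
    rw [show ((s:ℤ) - 2).toNat = s-2 by omega]
    rw [hPa, hPb, hc, Int.mul_ediv_cancel_left _ (by norm_num), e3, e4]
    rw [e6] at hc
    norm_num [Int.toNat_natCast] at hA' hB' ⊢
    rw [show (2:ℤ) ^ Int.toNat 3 = 8 from rfl]
    linarith [hA', hB', hc]
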